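/- (Logarithmic Sobolev-type inequality, Lemma 3.3.) Let p ∈ (3, ∞) and q ∈ [1, ∞). There exists a constant C depending only on p and q such that: for all real numbers s < t and every function f : (s,t) × ℝ³ → ℝ such that for almost every τ ∈ (s,t) the function f(τ,·) is continuously differentiable, and such that the functions τ ↦ ‖f(τ,·)‖_{L^∞(ℝ³)}, τ ↦ [f(τ,·)]_{BMO}, τ ↦ ‖f(τ,·)‖_{L^q(ℝ³)} and τ ↦ ‖∇f(τ,·)‖_{L^p(ℝ³)} are finite almost everywhere and integrable on (s,t), one has ∫ₛᵗ ‖f(τ,·)‖_{L^∞(ℝ³)} dτ ≤ C [ (∫ₛᵗ [f(τ,·)]_{BMO} dτ) · ln(1 + ∫ₛᵗ ‖∇f(τ,·)‖_{L^p(ℝ³)} dτ) + ∫ₛᵗ ‖f(τ,·)‖_{L^q(ℝ³)} dτ + 1 ]. -/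

import Mathlib

open MeasureTheory Metric
open scoped ENNReal

noncomputable section

/-- Euclidean three-space. -/
abbrev E3 := EuclideanSpace ℝ (Fin 3)

/-- The set of averages over balls of |g − (average of g)|, whose supremum is the BMO
seminorm of g. -/
def bmoSet (g : E3 → ℝ) : Set ℝ :=
  { m : ℝ | ∃ (x : E3) (ρ : ℝ), 0 < ρ ∧
      m = ⨍ y in Metric.ball x ρ, |g y - ⨍ z in Metric.ball x ρ, g z| }

/-- The BMO seminorm of g : ℝ³ → ℝ, the supremum over all centers x and radii ρ > 0 of
the average over B_ρ(x) of |g − g_{B_ρ(x)}|. -/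
def bmoSeminorm (g : E3 → ℝ) : ℝ := sSup (bmoSet g)

lemma finrank_E3 : Module.finrank ℝ E3 = 3 := by simp [finrank_euclideanSpace]

lemma seg_estimate {g : E3 → ℝ} (hg : ContDiff ℝ 1 g) (x y : E3) :
    |g x - g y| ≤ ‖y - x‖ * ∫ t in (0:ℝ)..1, ‖fderiv ℝ g (x + t • (y - x))‖ := by
  set γ : ℝ → E3 := fun t => x + t • (y - x) with hγdef
  have hγcont : Continuous γ := by continuity
  have hfc : Continuous (fderiv ℝ g) := hg.continuous_fderiv one_ne_zero
  have hφ : ∀ t : ℝ, HasDerivAt (fun s => g (γ s)) ((fderiv ℝ g (γ t)) (y - x)) t := by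
    intro t
    have hγ : HasDerivAt γ (y - x) t := by
      have h1 : HasDerivAt (fun s : ℝ => s • (y - x)) ((1:ℝ) • (y - x)) t :=
        (hasDerivAt_id t).smul_const (y - x)
      have h2 := h1.const_add x; rw [one_smul] at h2; exact h2
    have hgd : HasFDerivAt g (fderiv ℝ g (γ t)) (γ t) :=
      (hg.differentiable one_ne_zero (γ t)).hasFDerivAt
    exact hgd.comp_hasDerivAt t hγ
  have hcont' : Continuous fun t => (fderiv ℝ g (γ t)) (y - x) :=
    (hfc.comp hγcont).clm_apply continuous_const
  have hFTC : g (γ 1) - g (γ 0) = ∫ t in (0:ℝ)..1, (fderiv ℝ g (γ t)) (y - x) :=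
    (intervalIntegral.integral_eq_sub_of_hasDerivAt (fun t _ => hφ t)
      (hcont'.intervalIntegrable 0 1)).symm
  have hγ1 : γ 1 = y := by simp [hγdef]
  have hγ0 : γ 0 = x := by simp [hγdef]
  rw [hγ1, hγ0] at hFTC
  have h1 : |g x - g y| = |g y - g x| := abs_sub_comm _ _
  rw [h1, hFTC]
  calc |∫ t in (0:ℝ)..1, (fderiv ℝ g (γ t)) (y - x)|
      ≤ ∫ t in (0:ℝ)..1, ‖(fderiv ℝ g (γ t)) (y - x)‖ := by
        simpa [Real.norm_eq_abs] using
          intervalIntegral.norm_integral_le_integral_norm (f := fun t => (fderiv ℝ g (γ t)) (y - x)) zero_le_one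
    _ ≤ ∫ t in (0:ℝ)..1, ‖fderiv ℝ g (γ t)‖ * ‖y - x‖ := by
        apply intervalIntegral.integral_mono_on zero_le_one
          (hcont'.norm.intervalIntegrable 0 1)
          (((hfc.comp hγcont).norm.mul continuous_const).intervalIntegrable 0 1)
        intro t _
        exact ContinuousLinearMap.le_opNorm _ _
    _ = ‖y - x‖ * ∫ t in (0:ℝ)..1, ‖fderiv ℝ g (γ t)‖ := by
        rw [intervalIntegral.integral_mul_const]
        ring

lemma translate_lint (F : E3 → ℝ≥0∞) (hF : Measurable F) (x : E3) (s : Set E3)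
    (hs : MeasurableSet s) :
    ∫⁻ u in (fun u : E3 => u + x) ⁻¹' s, F (u + x) = ∫⁻ z in s, F z :=
  (measurePreserving_add_right volume x).setLIntegral_comp_preimage hs hF

lemma preimage_add_ball' (x c : E3) (ρ : ℝ) :
    (fun u : E3 => u + x) ⁻¹' Metric.ball (c + x) ρ = Metric.ball c ρ := by
  ext u
  simp [Metric.mem_ball, dist_eq_norm]

lemma scale_lint (F : E3 → ℝ≥0∞) (hF : Measurable F) {t : ℝ} (ht : 0 < t) {R : ℝ}
    (hR : 0 ≤ R) :
    ∫⁻ u in Metric.ball (0:E3) R, F (t • u)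
      = ENNReal.ofReal ((t ^ 3)⁻¹) * ∫⁻ z in Metric.ball (0:E3) (t * R), F z := by
  have hpre : ((t • ·) : E3 → E3) ⁻¹' Metric.ball 0 (t * R) = Metric.ball 0 R := by
    ext u
    simp only [Set.mem_preimage, Metric.mem_ball, dist_zero_right, norm_smul,
      Real.norm_eq_abs, abs_of_pos ht]
    exact mul_lt_mul_iff_right₀ ht
  have hmap : Measure.map ((t • ·) : E3 → E3) volume
      = ENNReal.ofReal ((t ^ 3)⁻¹) • (volume : Measure E3) := by
    rw [Measure.map_addHaar_smul volume (ne_of_gt ht), finrank_E3]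
    congr 1
    rw [abs_inv, abs_of_pos (pow_pos ht 3)]
  have := setLIntegral_map (μ := (volume : Measure E3)) (f := F) (g := ((t • ·) : E3 → E3))
    (s := Metric.ball (0:E3) (t * R)) measurableSet_ball hF (measurable_const_smul t)
  rw [hmap] at this
  rw [← hpre, ← this]
  simp [lintegral_smul_measure]

def v1 : ℝ≥0∞ := volume (Metric.ball (0:E3) 1)
lemma v1_pos : 0 < v1 := measure_ball_pos _ _ one_pos
lemma v1_lt_top : v1 < ⊤ := measure_ball_lt_top
lemma v1_toReal_pos : 0 < v1.toReal := ENNReal.toReal_pos v1_pos.ne' v1_lt_top.ne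
lemma vol_ball (x : E3) {r : ℝ} (hr : 0 ≤ r) :
    volume (Metric.ball x r) = ENNReal.ofReal (r ^ 3) * v1 := by
  rw [Measure.addHaar_ball volume x hr, finrank_E3]; rfl
lemma vol_ball_toReal (x : E3) {r : ℝ} (hr : 0 ≤ r) :
    (volume (Metric.ball x r)).toReal = r ^ 3 * v1.toReal := by
  rw [vol_ball x hr, ENNReal.toReal_mul, ENNReal.toReal_ofReal (by positivity)]
lemma integrableOn_ball_cont {g : E3 → ℝ} (hg : Continuous g) {x : E3} {r : ℝ} :
    IntegrableOn g (Metric.ball x r) volume :=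
  (hg.locallyIntegrable.integrableOn_isCompact (isCompact_closedBall x r)).mono_set
    Metric.ball_subset_closedBall
lemma exp_nonneg {e : ℝ≥0∞} (he : 1 ≤ e) : 0 ≤ 1 - 1/e.toReal := by
  rcases eq_or_ne e ⊤ with h | h
  · simp [h]
  · have h1 : 1 ≤ e.toReal := by
      rw [← ENNReal.toReal_one]; exact ENNReal.toReal_mono h he
    have : 1/e.toReal ≤ 1 := by
      rw [div_le_one (by linarith)]; linarith
    linarith
lemma lint_ball_le (g : E3 → ℝ) (hg : AEStronglyMeasurable g volume) {e : ℝ≥0∞}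
    (he : 1 ≤ e) (x : E3) {ρ : ℝ} (hρ : 0 ≤ ρ) :
    ∫⁻ y in Metric.ball x ρ, ‖g y‖₊ ∂volume ≤
      eLpNorm g e volume * (ENNReal.ofReal (ρ ^ 3) * v1) ^ (1 - 1/e.toReal) := by
  have h1 : ∫⁻ y in Metric.ball x ρ, ‖g y‖₊ ∂volume
      = eLpNorm g 1 (volume.restrict (Metric.ball x ρ)) := by
    exact (eLpNorm_one_eq_lintegral_enorm (f := g) (μ := volume.restrict (Metric.ball x ρ))).symm
  rw [h1]
  calc eLpNorm g 1 (volume.restrict (Metric.ball x ρ))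
      ≤ eLpNorm g e (volume.restrict (Metric.ball x ρ)) *
        (volume.restrict (Metric.ball x ρ)) Set.univ ^ (1/(1:ℝ≥0∞).toReal - 1/e.toReal) :=
        eLpNorm_le_eLpNorm_mul_rpow_measure_univ he hg.restrict
    _ ≤ eLpNorm g e volume * (ENNReal.ofReal (ρ ^ 3) * v1) ^ (1 - 1/e.toReal) := by
        rw [Measure.restrict_apply_univ, vol_ball x hρ]
        rw [ENNReal.toReal_one, one_div_one]
        exact mul_le_mul' (eLpNorm_mono_measure _ Measure.restrict_le_self) le_rfl

/-- the constant `∫_0^1 t^(-3/p) dt`. -/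
def Vp (p : ℝ) : ℝ := ∫ t in Set.Ioo (0:ℝ) 1, t ^ (-3/p)

lemma Vp_nonneg (p : ℝ) : 0 ≤ Vp p :=
  integral_nonneg_of_ae <| (ae_restrict_iff' measurableSet_Ioo).2 <|
    Filter.Eventually.of_forall fun t ht => Real.rpow_nonneg ht.1.le _

lemma Vp_integrableOn {p : ℝ} (hp : 3 < p) :
    IntegrableOn (fun t : ℝ => t ^ (-3/p)) (Set.Ioo (0:ℝ) 1) volume := by
  have h1 : (-1 : ℝ) < -3/p := by
    have hp0 : (0:ℝ) < p := by linarith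
    rw [neg_div, neg_lt_neg_iff, div_lt_one hp0]
    linarith
  have h2 : IntervalIntegrable (fun t : ℝ => t ^ (-3/p)) volume 0 1 :=
    intervalIntegral.intervalIntegrable_rpow' h1
  rw [intervalIntegrable_iff_integrableOn_Ioc_of_le zero_le_one] at h2
  exact h2.mono_set Set.Ioo_subset_Ioc_self

lemma lint_Vp {p : ℝ} (hp : 3 < p) :
    ∫⁻ t in Set.Ioo (0:ℝ) 1, ENNReal.ofReal (t ^ (-3/p)) = ENNReal.ofReal (Vp p) :=
  (ofReal_integral_eq_lintegral_ofReal (Vp_integrableOn hp)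
    ((ae_restrict_iff' measurableSet_Ioo).2 <|
      Filter.Eventually.of_forall fun t ht => Real.rpow_nonneg ht.1.le _)).symm

lemma rpow_fact {r : ℝ} (hr : 0 < r) (a : ℝ) :
    (r ^ 3)⁻¹ * (r * (r ^ 3) ^ a) = r ^ (3 * a - 2) := by
  have e1 : ((r ^ 3 : ℝ))⁻¹ = r ^ (-(3:ℝ)) := by
    rw [← Real.rpow_natCast r 3, ← Real.rpow_neg hr.le]; norm_num
  have e2 : ((r ^ 3 : ℝ)) ^ a = r ^ (3 * a) := by
    rw [← Real.rpow_natCast r 3, ← Real.rpow_mul hr.le]; norm_num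
  rw [e1, e2]
  nth_rewrite 2 [show (r : ℝ) = r ^ (1:ℝ) from (Real.rpow_one r).symm]
  rw [← Real.rpow_add hr, ← Real.rpow_add hr]
  congr 1
  ring

lemma scal_fact {p t r : ℝ} (hp : 3 < p) (ht : 0 < t) (hr : 0 < r) :
    (t ^ 3)⁻¹ * ((t * r) ^ 3) ^ (1 - 1/p) = t ^ (-3/p) * (r ^ 3) ^ (1 - 1/p) := by
  have hp0 : (0:ℝ) < p := by linarith
  rw [mul_pow, Real.mul_rpow (by positivity) (by positivity)]
  have h1 : (t ^ 3)⁻¹ * ((t ^ 3) ^ (1 - 1/p) * (r ^ 3) ^ (1 - 1/p))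
      = ((t ^ 3)⁻¹ * (t ^ 3) ^ (1 - 1/p)) * (r ^ 3) ^ (1 - 1/p) := by ring
  rw [h1]
  congr 1
  rw [← Real.rpow_natCast t 3, ← Real.rpow_mul ht.le, ← Real.rpow_neg ht.le,
    ← Real.rpow_add ht]
  congr 1
  push_cast
  field_simp
  ring

def cM (p : ℝ) : ℝ := (v1.toReal)⁻¹ * Vp p * (v1 ^ (1 - 1/p)).toReal

lemma cM_nonneg (p : ℝ) : 0 ≤ cM p :=
  mul_nonneg (mul_nonneg (inv_nonneg.2 ENNReal.toReal_nonneg) (Vp_nonneg p))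
    ENNReal.toReal_nonneg

lemma morrey {p : ℝ} (hp : 3 < p) {g : E3 → ℝ} (hg : ContDiff ℝ 1 g)
    (hfin : eLpNorm (fun z => ‖fderiv ℝ g z‖) (ENNReal.ofReal p) volume < ⊤)
    (x : E3) {r : ℝ} (hr : 0 < r) :
    |g x - ⨍ y in Metric.ball x r, g y| ≤
      cM p * r ^ (1 - 3/p) *
        (eLpNorm (fun z => ‖fderiv ℝ g z‖) (ENNReal.ofReal p) volume).toReal := by
  have hp0 : (0:ℝ) < p := by linarith
  set h : E3 → ℝ := fun z => ‖fderiv ℝ g z‖ with hh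
  set Np := eLpNorm h (ENNReal.ofReal p) volume with hNp
  have hhcont : Continuous h := (hg.continuous_fderiv one_ne_zero).norm
  have gcont : Continuous g := hg.continuous
  have he1 : (1:ℝ≥0∞) ≤ ENNReal.ofReal p := by
    rw [show (1:ℝ≥0∞) = ENNReal.ofReal 1 by simp]
    exact ENNReal.ofReal_le_ofReal (by linarith)
  have hpt : (ENNReal.ofReal p).toReal = p := ENNReal.toReal_ofReal hp0.le
  set e : ℝ := 1 - 1/p with hedef
  have he0 : (0:ℝ) ≤ e := by
    have : 1/p ≤ 1 := by rw [div_le_one hp0]; linarith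
    simp only [hedef]; linarith
  set Cin : ℝ≥0∞ := ENNReal.ofReal ((r^3)^e) * ((v1 ^ e) * Np) with hCin
  have hCin_ne_top : Cin ≠ ⊤ := by
    apply ENNReal.mul_ne_top ENNReal.ofReal_ne_top
    exact ENNReal.mul_ne_top (ENNReal.rpow_lt_top_of_nonneg he0 v1_lt_top.ne).ne hfin.ne
  -- inner estimate for fixed t
  have inner : ∀ t ∈ Set.Ioo (0:ℝ) 1,
      (∫⁻ y in Metric.ball x r, ENNReal.ofReal (h (x + t • (y - x)))) ≤
        ENNReal.ofReal (t ^ (-3/p)) * Cin := by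
    intro t ht
    have hmap1 : Continuous fun z : E3 => x + t • (z - x) :=
      continuous_const.add ((continuous_id.sub continuous_const).const_smul t)
    have hF1 : Measurable (fun z : E3 => ENNReal.ofReal (h (x + t • (z - x)))) :=
      ((hhcont.comp hmap1).measurable).ennreal_ofReal
    have T1 : ∫⁻ y in Metric.ball x r, ENNReal.ofReal (h (x + t • (y - x)))
        = ∫⁻ u in Metric.ball (0:E3) r, ENNReal.ofReal (h (x + t • u)) := by
      rw [← translate_lint (fun z => ENNReal.ofReal (h (x + t • (z - x)))) hF1 x
        (Metric.ball x r) measurableSet_ball]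
      have hpre : (fun u : E3 => u + x) ⁻¹' Metric.ball x r = Metric.ball 0 r := by
        have := preimage_add_ball' x 0 r; rwa [zero_add] at this
      rw [hpre]
      refine setLIntegral_congr_fun measurableSet_ball
        (fun u _ => ?_)
      simp
    have T2 : ∫⁻ u in Metric.ball (0:E3) r, ENNReal.ofReal (h (x + t • u))
        = ENNReal.ofReal ((t^3)⁻¹) *
          ∫⁻ z in Metric.ball (0:E3) (t*r), ENNReal.ofReal (h (x + z)) :=
      scale_lint (fun z => ENNReal.ofReal (h (x + z)))
        ((hhcont.comp (continuous_const.add continuous_id)).measurable.ennreal_ofReal)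
        ht.1 hr.le
    have T3 : ∫⁻ z in Metric.ball (0:E3) (t*r), ENNReal.ofReal (h (x + z))
        = ∫⁻ w in Metric.ball x (t*r), ENNReal.ofReal (h w) := by
      rw [← translate_lint (fun w => ENNReal.ofReal (h w))
        (hhcont.measurable.ennreal_ofReal) x (Metric.ball x (t*r)) measurableSet_ball]
      have hpre : (fun u : E3 => u + x) ⁻¹' Metric.ball x (t*r) = Metric.ball 0 (t*r) := by
        have := preimage_add_ball' x 0 (t*r); rwa [zero_add] at this
      rw [hpre]
      refine setLIntegral_congr_fun measurableSet_ball
        (fun u _ => ?_)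
      rw [add_comm]
    have T4 : ∫⁻ w in Metric.ball x (t*r), ENNReal.ofReal (h w)
        ≤ Np * (ENNReal.ofReal ((t*r)^3) * v1) ^ e := by
      have hH := lint_ball_le h hhcont.aestronglyMeasurable he1 x
        (mul_nonneg ht.1.le hr.le)
      rw [hpt] at hH
      refine le_trans (le_of_eq ?_) hH
      refine setLIntegral_congr_fun measurableSet_ball
        (fun w _ => ?_)
      exact (Real.enorm_eq_ofReal (norm_nonneg _)).symm
    rw [T1, T2, T3]
    calc ENNReal.ofReal ((t^3)⁻¹) * ∫⁻ w in Metric.ball x (t*r), ENNReal.ofReal (h w)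
        ≤ ENNReal.ofReal ((t^3)⁻¹) * (Np * (ENNReal.ofReal ((t*r)^3) * v1) ^ e) :=
          mul_le_mul_right T4 _
      _ = ENNReal.ofReal (t ^ (-3/p)) * Cin := by
          rw [ENNReal.mul_rpow_of_nonneg _ _ he0,
            ENNReal.ofReal_rpow_of_nonneg (pow_nonneg (mul_nonneg ht.1.le hr.le) 3) he0]
          rw [show ENNReal.ofReal ((t^3)⁻¹) * (Np * (ENNReal.ofReal (((t*r)^3)^e) * v1 ^ e))
              = (ENNReal.ofReal ((t^3)⁻¹) * ENNReal.ofReal (((t*r)^3)^e)) * (v1 ^ e * Np) by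
            ring]
          rw [← ENNReal.ofReal_mul (inv_nonneg.2 (pow_nonneg ht.1.le 3)),
            scal_fact hp ht.1 hr,
            ENNReal.ofReal_mul (Real.rpow_nonneg ht.1.le _), hCin]
          ring
  -- pointwise segment bound
  have hseg : ∀ y ∈ Metric.ball x r, ENNReal.ofReal |g x - g y| ≤
      ENNReal.ofReal r *
        ∫⁻ t in Set.Ioo (0:ℝ) 1, ENNReal.ofReal (h (x + t • (y - x))) := by
    intro y hy
    have h1 := seg_estimate hg x y
    have hmap2 : Continuous fun t : ℝ => x + t • (y - x) :=
      continuous_const.add (continuous_id.smul continuous_const)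
    have hIint : IntegrableOn (fun t : ℝ => h (x + t • (y - x))) (Set.Ioo (0:ℝ) 1) volume :=
      ((hhcont.comp hmap2).locallyIntegrable.integrableOn_isCompact
        isCompact_Icc).mono_set Set.Ioo_subset_Icc_self
    have hInn : (0:ℝ) ≤ ∫ t in (0:ℝ)..1, h (x + t • (y - x)) :=
      intervalIntegral.integral_nonneg zero_le_one fun t _ => norm_nonneg _
    have hIeq : ∫ t in (0:ℝ)..1, h (x + t • (y - x))
        = ∫ t in Set.Ioo (0:ℝ) 1, h (x + t • (y - x)) := by
      rw [intervalIntegral.integral_of_le zero_le_one, integral_Ioc_eq_integral_Ioo]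
    have hIofReal : ENNReal.ofReal (∫ t in Set.Ioo (0:ℝ) 1, h (x + t • (y - x)))
        = ∫⁻ t in Set.Ioo (0:ℝ) 1, ENNReal.ofReal (h (x + t • (y - x))) :=
      ofReal_integral_eq_lintegral_ofReal hIint
        (Filter.Eventually.of_forall fun t => norm_nonneg _)
    have hnorm : ‖y - x‖ ≤ r := by
      rw [Metric.mem_ball, dist_eq_norm] at hy; exact hy.le
    calc ENNReal.ofReal |g x - g y|
        ≤ ENNReal.ofReal (r * ∫ t in Set.Ioo (0:ℝ) 1, h (x + t • (y - x))) := by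
          apply ENNReal.ofReal_le_ofReal
          rw [← hIeq]
          exact h1.trans (mul_le_mul_of_nonneg_right hnorm hInn)
      _ = ENNReal.ofReal r *
            ∫⁻ t in Set.Ioo (0:ℝ) 1, ENNReal.ofReal (h (x + t • (y - x))) := by
          rw [ENNReal.ofReal_mul hr.le, hIofReal]
  -- the main lintegral bound
  set K := ∫⁻ y in Metric.ball x r, ENNReal.ofReal |g x - g y| with hK
  have hswap : ∫⁻ y in Metric.ball x r,
        (∫⁻ t in Set.Ioo (0:ℝ) 1, ENNReal.ofReal (h (x + t • (y - x))))
      = ∫⁻ t in Set.Ioo (0:ℝ) 1,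
          (∫⁻ y in Metric.ball x r, ENNReal.ofReal (h (x + t • (y - x)))) := by
    apply lintegral_lintegral_swap
    apply Measurable.aemeasurable
    have : Continuous fun q : E3 × ℝ => h (x + q.2 • (q.1 - x)) :=
      hhcont.comp (continuous_const.add
        (continuous_snd.smul (continuous_fst.sub continuous_const)))
    exact this.measurable.ennreal_ofReal
  have hKle : K ≤ ENNReal.ofReal r * (ENNReal.ofReal (Vp p) * Cin) := by
    calc K ≤ ∫⁻ y in Metric.ball x r, ENNReal.ofReal r *
          ∫⁻ t in Set.Ioo (0:ℝ) 1, ENNReal.ofReal (h (x + t • (y - x))) :=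
        setLIntegral_mono' measurableSet_ball hseg
      _ = ENNReal.ofReal r * ∫⁻ y in Metric.ball x r,
          ∫⁻ t in Set.Ioo (0:ℝ) 1, ENNReal.ofReal (h (x + t • (y - x))) :=
        lintegral_const_mul' _ _ ENNReal.ofReal_ne_top
      _ = ENNReal.ofReal r * ∫⁻ t in Set.Ioo (0:ℝ) 1,
          ∫⁻ y in Metric.ball x r, ENNReal.ofReal (h (x + t • (y - x))) := by rw [hswap]
      _ ≤ ENNReal.ofReal r * ∫⁻ t in Set.Ioo (0:ℝ) 1,
          ENNReal.ofReal (t ^ (-3/p)) * Cin :=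
        mul_le_mul_right (setLIntegral_mono' measurableSet_Ioo inner) _
      _ = ENNReal.ofReal r * (ENNReal.ofReal (Vp p) * Cin) := by
        rw [lintegral_mul_const' Cin _ hCin_ne_top, lint_Vp hp]
  -- back to the real world
  have hμpos : 0 < (volume (Metric.ball x r)).toReal := by
    rw [vol_ball_toReal x hr.le]
    exact mul_pos (by positivity) v1_toReal_pos
  have hintg : IntegrableOn g (Metric.ball x r) volume := integrableOn_ball_cont gcont
  have hintc : IntegrableOn (fun _ : E3 => g x) (Metric.ball x r) volume :=
    integrableOn_const measure_ball_lt_top.ne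
  have hint2 : IntegrableOn (fun y => |g x - g y|) (Metric.ball x r) volume :=
    (hintc.sub hintg).abs
  have havg1 : g x - ⨍ y in Metric.ball x r, g y
      = ⨍ y in Metric.ball x r, (g x - g y) := by
    rw [setAverage_eq volume _ _, setAverage_eq volume _ _, smul_eq_mul, smul_eq_mul,
      integral_sub hintc hintg, setIntegral_const, smul_eq_mul]
    have hne : volume.real (Metric.ball x r) ≠ 0 := hμpos.ne'
    field_simp
  have havg2 : |⨍ y in Metric.ball x r, (g x - g y)|
      ≤ ⨍ y in Metric.ball x r, |g x - g y| := by
    rw [setAverage_eq volume _ _, setAverage_eq volume _ _, smul_eq_mul, smul_eq_mul,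
      abs_mul, abs_inv, abs_of_nonneg measureReal_nonneg]
    gcongr
    simpa [Real.norm_eq_abs] using
      norm_integral_le_integral_norm (fun y => g x - g y)
  have hKeq : ∫ y in Metric.ball x r, |g x - g y| = K.toReal := by
    rw [hK, ← ofReal_integral_eq_lintegral_ofReal hint2
      (Filter.Eventually.of_forall fun y => abs_nonneg _),
      ENNReal.toReal_ofReal (integral_nonneg fun y => abs_nonneg _)]
  have hRHS_ne_top : ENNReal.ofReal r * (ENNReal.ofReal (Vp p) * Cin) ≠ ⊤ :=
    ENNReal.mul_ne_top ENNReal.ofReal_ne_top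
      (ENNReal.mul_ne_top ENNReal.ofReal_ne_top hCin_ne_top)
  have hKR : K.toReal ≤ r * (Vp p * ((r^3)^e * ((v1 ^ e).toReal * Np.toReal))) := by
    have := ENNReal.toReal_mono hRHS_ne_top hKle
    rwa [ENNReal.toReal_mul, ENNReal.toReal_mul, hCin, ENNReal.toReal_mul,
      ENNReal.toReal_mul, ENNReal.toReal_ofReal hr.le,
      ENNReal.toReal_ofReal (Vp_nonneg p), ENNReal.toReal_ofReal (by positivity)] at this
  -- assemble
  have hmain : |g x - ⨍ y in Metric.ball x r, g y|
      ≤ (r^3 * v1.toReal)⁻¹ * (r * (Vp p * ((r^3)^e * ((v1 ^ e).toReal * Np.toReal)))) := by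
    rw [havg1]
    refine havg2.trans ?_
    rw [setAverage_eq volume _ _, smul_eq_mul, measureReal_def, vol_ball_toReal x hr.le, hKeq]
    exact mul_le_mul_of_nonneg_left hKR (by positivity)
  refine hmain.trans (le_of_eq ?_)
  have h2 := rpow_fact hr e
  have h3 : 3 * e - 2 = 1 - 3/p := by rw [hedef]; ring
  calc (r^3 * v1.toReal)⁻¹ * (r * (Vp p * ((r^3)^e * ((v1 ^ e).toReal * Np.toReal))))
      = ((v1.toReal)⁻¹ * Vp p * (v1 ^ e).toReal) *
          ((r^3)⁻¹ * (r * (r^3)^e)) * Np.toReal := by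
        rw [mul_inv]; ring
    _ = cM p * r ^ (1 - 3/p) * Np.toReal := by
        rw [h2, h3, cM, hedef]

def c1 (q : ℝ) : ℝ := (v1.toReal)⁻¹ * (v1 ^ (1 - 1/q)).toReal

lemma c1_nonneg (q : ℝ) : 0 ≤ c1 q :=
  mul_nonneg (inv_nonneg.2 ENNReal.toReal_nonneg) ENNReal.toReal_nonneg

lemma avg_ball_q {q : ℝ} (hq : 1 ≤ q) {g : E3 → ℝ} (hg : Continuous g)
    (hfin : eLpNorm g (ENNReal.ofReal q) volume < ⊤) (x : E3) :
    |⨍ y in Metric.ball x 1, g y| ≤ c1 q * (eLpNorm g (ENNReal.ofReal q) volume).toReal := by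
  have hq0 : (0:ℝ) < q := by linarith
  have he : (1:ℝ≥0∞) ≤ ENNReal.ofReal q := by
    rw [show (1:ℝ≥0∞) = ENNReal.ofReal 1 by simp]
    exact ENNReal.ofReal_le_ofReal hq
  have hint : IntegrableOn g (Metric.ball x 1) volume := integrableOn_ball_cont hg
  have habs : |∫ y in Metric.ball x 1, g y| ≤
      (∫⁻ y in Metric.ball x 1, ‖g y‖₊ ∂volume).toReal := by
    have h2 : ENNReal.ofReal (∫ y in Metric.ball x 1, ‖g y‖) =
        ∫⁻ y in Metric.ball x 1, ‖g y‖₊ ∂volume :=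
      ofReal_integral_norm_eq_lintegral_enorm hint
    have h3 : |∫ y in Metric.ball x 1, g y| ≤ ∫ y in Metric.ball x 1, ‖g y‖ :=
      norm_integral_le_integral_norm g
    rw [← h2, ENNReal.toReal_ofReal (integral_nonneg (fun y => norm_nonneg _))]
    exact h3
  have hexp : (ENNReal.ofReal q).toReal = q := ENNReal.toReal_ofReal hq0.le
  have hLe := lint_ball_le g hg.aestronglyMeasurable he x (zero_le_one)
  rw [hexp] at hLe
  have hfin2 : eLpNorm g (ENNReal.ofReal q) volume *
      (ENNReal.ofReal ((1:ℝ) ^ 3) * v1) ^ (1 - 1/q) ≠ ⊤ := by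
    apply ENNReal.mul_ne_top hfin.ne
    exact (ENNReal.rpow_lt_top_of_nonneg (by
      have := exp_nonneg he; rwa [hexp] at this)
      (by simp [v1_lt_top.ne])).ne
  have h4 : (∫⁻ y in Metric.ball x 1, ‖g y‖₊ ∂volume).toReal ≤
      (eLpNorm g (ENNReal.ofReal q) volume).toReal * (v1 ^ (1 - 1/q)).toReal := by
    have := ENNReal.toReal_mono hfin2 hLe
    rwa [ENNReal.toReal_mul, one_pow, ENNReal.ofReal_one, one_mul] at this
  have havg : ⨍ y in Metric.ball x 1, g y =
      (volume (Metric.ball x 1)).toReal⁻¹ • ∫ y in Metric.ball x 1, g y := setAverage_eq volume g _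
  rw [havg, smul_eq_mul, abs_mul, abs_inv, abs_of_nonneg ENNReal.toReal_nonneg,
    vol_ball_toReal x zero_le_one, one_pow, one_mul]
  calc (v1.toReal)⁻¹ * |∫ y in Metric.ball x 1, g y|
      ≤ (v1.toReal)⁻¹ * ((eLpNorm g (ENNReal.ofReal q) volume).toReal * (v1 ^ (1 - 1/q)).toReal) := by
        gcongr
        exact habs.trans h4
    _ = c1 q * (eLpNorm g (ENNReal.ofReal q) volume).toReal := by
        rw [c1]; ring

lemma bmo_mem_le {g : E3 → ℝ} (hB : BddAbove (bmoSet g)) (x : E3) {ρ : ℝ} (hρ : 0 < ρ) :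
    ⨍ y in Metric.ball x ρ, |g y - ⨍ z in Metric.ball x ρ, g z| ≤ bmoSeminorm g :=
  le_csSup hB ⟨x, ρ, hρ, rfl⟩

lemma setAverage_abs_nonneg (g : E3 → ℝ) (c : ℝ) (s : Set E3) :
    0 ≤ ⨍ y in s, |g y - c| := by
  rw [setAverage_eq volume _ s]
  exact smul_nonneg (inv_nonneg.2 ENNReal.toReal_nonneg)
    (integral_nonneg fun y => abs_nonneg _)

lemma bmo_nonneg {g : E3 → ℝ} (hB : BddAbove (bmoSet g)) : 0 ≤ bmoSeminorm g :=
  le_trans (setAverage_abs_nonneg g _ _) (bmo_mem_le hB 0 one_pos)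

lemma telescope {g : E3 → ℝ} (hg : Continuous g) (hB : BddAbove (bmoSet g)) (x : E3)
    {ρ : ℝ} (hρ : 0 < ρ) :
    |(⨍ y in Metric.ball x (ρ/2), g y) - ⨍ y in Metric.ball x ρ, g y| ≤ 8 * bmoSeminorm g := by
  set c := ⨍ z in Metric.ball x ρ, g z with hc
  have hρ2 : (0:ℝ) < ρ/2 := by linarith
  have hsub : Metric.ball x (ρ/2) ⊆ Metric.ball x ρ := Metric.ball_subset_ball (by linarith)
  have hμ' : (volume (Metric.ball x (ρ/2))).toReal = (ρ/2)^3 * v1.toReal :=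
    vol_ball_toReal x hρ2.le
  have hμ : (volume (Metric.ball x ρ)).toReal = ρ^3 * v1.toReal := vol_ball_toReal x hρ.le
  have hμ'pos : 0 < (volume (Metric.ball x (ρ/2))).toReal := by
    rw [hμ']; exact mul_pos (by positivity) v1_toReal_pos
  have hint : IntegrableOn g (Metric.ball x (ρ/2)) volume := integrableOn_ball_cont hg
  have hintc : IntegrableOn (fun _ : E3 => c) (Metric.ball x (ρ/2)) volume :=
    integrableOn_const measure_ball_lt_top.ne
  -- step 1: difference of averages as average of difference
  have h1 : (⨍ y in Metric.ball x (ρ/2), g y) - c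
      = ⨍ y in Metric.ball x (ρ/2), (g y - c) := by
    rw [setAverage_eq volume _ _, setAverage_eq volume _ _, smul_eq_mul, smul_eq_mul,
      integral_sub hint hintc, setIntegral_const, smul_eq_mul]
    have hne : volume.real (Metric.ball x (ρ/2)) ≠ 0 := hμ'pos.ne'
    field_simp
  rw [h1]
  -- step 2: abs of average ≤ average of abs
  have h2 : |⨍ y in Metric.ball x (ρ/2), (g y - c)|
      ≤ ⨍ y in Metric.ball x (ρ/2), |g y - c| := by
    rw [setAverage_eq volume _ _, setAverage_eq volume _ _, smul_eq_mul, smul_eq_mul, abs_mul,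
      abs_inv, abs_of_nonneg measureReal_nonneg]
    gcongr
    simpa [Real.norm_eq_abs] using norm_integral_le_integral_norm (fun y => g y - c)
  refine h2.trans ?_
  -- step 3: enlarge domain
  have hintabs : IntegrableOn (fun y => |g y - c|) (Metric.ball x ρ) volume := by
    have : IntegrableOn (fun y => g y - c) (Metric.ball x ρ) volume :=
      (integrableOn_ball_cont hg).sub (integrableOn_const measure_ball_lt_top.ne)
    exact this.abs
  have h3 : ∫ y in Metric.ball x (ρ/2), |g y - c| ≤ ∫ y in Metric.ball x ρ, |g y - c| :=
    setIntegral_mono_set hintabs (Filter.Eventually.of_forall fun y => abs_nonneg _)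
      (HasSubset.Subset.eventuallyLE hsub)
  have h4 : ⨍ y in Metric.ball x (ρ/2), |g y - c| ≤ 8 * ⨍ y in Metric.ball x ρ, |g y - c| := by
    rw [setAverage_eq volume _ _, setAverage_eq volume _ _, smul_eq_mul, smul_eq_mul, measureReal_def, measureReal_def, hμ', hμ]
    have h5 : ((ρ/2)^3 * v1.toReal)⁻¹ = 8 * (ρ^3 * v1.toReal)⁻¹ := by
      field_simp; ring
    rw [h5, mul_assoc]
    exact mul_le_mul_of_nonneg_left (mul_le_mul_of_nonneg_left h3 (by positivity))
      (by norm_num)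
  refine h4.trans ?_
  have := bmo_mem_le hB x hρ
  linarith [this]

lemma pointwise_bound {p q : ℝ} (hp : 3 < p) (hq : 1 ≤ q) {g : E3 → ℝ}
    (hg : ContDiff ℝ 1 g) (hB : BddAbove (bmoSet g))
    (hq_fin : eLpNorm g (ENNReal.ofReal q) volume < ⊤)
    (hp_fin : eLpNorm (fun z => ‖fderiv ℝ g z‖) (ENNReal.ofReal p) volume < ⊤)
    (k : ℕ) :
    (eLpNorm g ⊤ volume).toReal ≤
      c1 q * (eLpNorm g (ENNReal.ofReal q) volume).toReal
      + 8 * k * bmoSeminorm g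
      + cM p * ((2:ℝ)⁻¹ ^ k) ^ (1 - 3/p) *
        (eLpNorm (fun z => ‖fderiv ℝ g z‖) (ENNReal.ofReal p) volume).toReal := by
  have gcont : Continuous g := hg.continuous
  set r : ℝ := (2:ℝ)⁻¹ ^ k with hrdef
  have hr : 0 < r := by positivity
  set M : ℝ := c1 q * (eLpNorm g (ENNReal.ofReal q) volume).toReal
      + 8 * k * bmoSeminorm g
      + cM p * r ^ (1 - 3/p) *
        (eLpNorm (fun z => ‖fderiv ℝ g z‖) (ENNReal.ofReal p) volume).toReal with hM
  have hM0 : 0 ≤ M := by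
    have h1 : 0 ≤ c1 q * (eLpNorm g (ENNReal.ofReal q) volume).toReal :=
      mul_nonneg (c1_nonneg q) ENNReal.toReal_nonneg
    have h2 : 0 ≤ 8 * (k:ℝ) * bmoSeminorm g := by
      have := bmo_nonneg hB; positivity
    have h3 : 0 ≤ cM p * r ^ (1 - 3/p) *
        (eLpNorm (fun z => ‖fderiv ℝ g z‖) (ENNReal.ofReal p) volume).toReal :=
      mul_nonneg (mul_nonneg (cM_nonneg p) (Real.rpow_nonneg hr.le _))
        ENNReal.toReal_nonneg
    rw [hM]; linarith
  -- telescoping: distance between the average at radius (2⁻¹)^j and radius 1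
  have htel : ∀ j : ℕ, ∀ x : E3,
      |(⨍ y in Metric.ball x ((2:ℝ)⁻¹ ^ j), g y) - ⨍ y in Metric.ball x 1, g y|
        ≤ 8 * j * bmoSeminorm g := by
    intro j
    induction j with
    | zero => intro x; simp
    | succ n ih =>
      intro x
      have hρ : (0:ℝ) < (2:ℝ)⁻¹ ^ n := by positivity
      have hstep := telescope gcont hB x hρ
      have hhalf : ((2:ℝ)⁻¹ ^ n) / 2 = (2:ℝ)⁻¹ ^ (n+1) := by
        rw [pow_succ]; ring
      rw [hhalf] at hstep
      calc |(⨍ y in Metric.ball x ((2:ℝ)⁻¹ ^ (n+1)), g y) - ⨍ y in Metric.ball x 1, g y|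
          ≤ |(⨍ y in Metric.ball x ((2:ℝ)⁻¹ ^ (n+1)), g y)
              - ⨍ y in Metric.ball x ((2:ℝ)⁻¹ ^ n), g y|
            + |(⨍ y in Metric.ball x ((2:ℝ)⁻¹ ^ n), g y) - ⨍ y in Metric.ball x 1, g y| :=
            abs_sub_le _ _ _
        _ ≤ 8 * bmoSeminorm g + 8 * n * bmoSeminorm g := add_le_add hstep (ih x)
        _ = 8 * (n+1 : ℕ) * bmoSeminorm g := by push_cast; ring
  -- pointwise bound
  have hpt : ∀ x : E3, |g x| ≤ M := by
    intro x
    have t1 := morrey hp hg hp_fin x hr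
    have t2 := htel k x
    have t3 := avg_ball_q hq gcont hq_fin x
    rw [← hrdef] at t2
    set Ar := ⨍ y in Metric.ball x r, g y with hAr
    set A1 := ⨍ y in Metric.ball x 1, g y with hA1
    have h4 : |g x| ≤ |g x - Ar| + (|Ar - A1| + |A1|) := by
      calc |g x| = |(g x - Ar) + ((Ar - A1) + A1)| := by congr 1; ring
        _ ≤ |g x - Ar| + |(Ar - A1) + A1| := abs_add_le _ _
        _ ≤ |g x - Ar| + (|Ar - A1| + |A1|) := by
            have := abs_add_le (Ar - A1) A1
            linarith
    rw [hM]
    linarith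
  have hess : eLpNorm g ⊤ volume ≤ ENNReal.ofReal M := by
    rw [eLpNorm_exponent_top]
    exact eLpNormEssSup_le_of_ae_bound
      (Filter.Eventually.of_forall fun x => by
        rw [Real.norm_eq_abs]; exact hpt x)
  calc (eLpNorm g ⊤ volume).toReal ≤ (ENNReal.ofReal M).toReal :=
      ENNReal.toReal_mono ENNReal.ofReal_ne_top hess
    _ = M := ENNReal.toReal_ofReal hM0
/-- logarithmic Sobolev-type inequality, Lemma 3.3: for p ∈ (3,∞) and
q ∈ [1,∞) there is a constant C depending only on p and q such that for all s < t and
every f : (s,t) × ℝ³ → ℝ which is C¹ in the space variable for a.e. time, with the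
L^∞, BMO, L^q and gradient-L^p norms finite a.e. and integrable in time on (s,t),
∫ₛᵗ ‖f(τ)‖_{L^∞} dτ ≤ C[(∫ₛᵗ [f(τ)]_BMO dτ) ln(1 + ∫ₛᵗ ‖∇f(τ)‖_{L^p} dτ)
  + ∫ₛᵗ ‖f(τ)‖_{L^q} dτ + 1]. -/
theorem log_sobolev_type_inequality (p q : ℝ) (hp : 3 < p) (hq : 1 ≤ q) :
    ∃ C : ℝ, ∀ s t : ℝ, s < t → ∀ f : ℝ → E3 → ℝ,
      (∀ᵐ τ ∂(volume.restrict (Set.Ioo s t)), ContDiff ℝ 1 (f τ)) →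
      (∀ᵐ τ ∂(volume.restrict (Set.Ioo s t)),
          eLpNorm (f τ) ⊤ volume < ⊤ ∧
          BddAbove (bmoSet (f τ)) ∧
          eLpNorm (f τ) (ENNReal.ofReal q) volume < ⊤ ∧
          eLpNorm (fun x => ‖fderiv ℝ (f τ) x‖) (ENNReal.ofReal p) volume < ⊤) →
      IntegrableOn (fun τ => (eLpNorm (f τ) ⊤ volume).toReal) (Set.Ioo s t) →
      IntegrableOn (fun τ => bmoSeminorm (f τ)) (Set.Ioo s t) →
      IntegrableOn (fun τ => (eLpNorm (f τ) (ENNReal.ofReal q) volume).toReal)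
        (Set.Ioo s t) →
      IntegrableOn
        (fun τ => (eLpNorm (fun x => ‖fderiv ℝ (f τ) x‖) (ENNReal.ofReal p) volume).toReal)
        (Set.Ioo s t) →
      ∫ τ in Set.Ioo s t, (eLpNorm (f τ) ⊤ volume).toReal ≤
        C * ((∫ τ in Set.Ioo s t, bmoSeminorm (f τ)) *
              Real.log (1 + ∫ τ in Set.Ioo s t,
                (eLpNorm (fun x => ‖fderiv ℝ (f τ) x‖) (ENNReal.ofReal p) volume).toReal)
            + (∫ τ in Set.Ioo s t, (eLpNorm (f τ) (ENNReal.ofReal q) volume).toReal)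
            + 1) := by
  have hp0 : (0:ℝ) < p := by linarith
  set α : ℝ := 1 - 3/p with hα
  have hα0 : 0 < α := by
    have : 3/p < 1 := by rw [div_lt_one hp0]; linarith
    simp only [hα]; linarith
  have hlog2 : (0:ℝ) < Real.log 2 := Real.log_pos one_lt_two
  set K2 : ℝ := 8 / (α * Real.log 2) + 8 / Real.log 2 with hK2
  have hK2_0 : 0 ≤ K2 := by positivity
  refine ⟨c1 q + cM p + K2 + 1, ?_⟩
  intro s t hst f hcd hfin hIinf hIbmo hIq hIp
  set A := ∫ τ in Set.Ioo s t, bmoSeminorm (f τ) with hA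
  set B := ∫ τ in Set.Ioo s t, (eLpNorm (f τ) (ENNReal.ofReal q) volume).toReal with hB
  set N := ∫ τ in Set.Ioo s t,
    (eLpNorm (fun x => ‖fderiv ℝ (f τ) x‖) (ENNReal.ofReal p) volume).toReal with hN
  set C : ℝ := c1 q + cM p + K2 + 1 with hC
  have hC0 : 0 ≤ C := by
    have := c1_nonneg q; have := cM_nonneg p; rw [hC]; linarith
  have hA0 : 0 ≤ A := by
    refine integral_nonneg_of_ae ?_
    filter_upwards [hfin] with τ hτ
    exact bmo_nonneg hτ.2.1
  have hB0 : 0 ≤ B := integral_nonneg fun τ => ENNReal.toReal_nonneg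
  have hN0 : 0 ≤ N := integral_nonneg fun τ => ENNReal.toReal_nonneg
  have hlogN0 : 0 ≤ Real.log (1 + N) := Real.log_nonneg (by linarith)
  -- key: integrated pointwise bound, for every k
  have key : ∀ k : ℕ,
      (∫ τ in Set.Ioo s t, (eLpNorm (f τ) ⊤ volume).toReal) ≤
        c1 q * B + 8 * k * A + cM p * ((2:ℝ)⁻¹ ^ k) ^ α * N := by
    intro k
    have hmono : (∫ τ in Set.Ioo s t, (eLpNorm (f τ) ⊤ volume).toReal) ≤
        ∫ τ in Set.Ioo s t,
          (c1 q * (eLpNorm (f τ) (ENNReal.ofReal q) volume).toReal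
            + 8 * k * bmoSeminorm (f τ)
            + cM p * ((2:ℝ)⁻¹ ^ k) ^ α *
              (eLpNorm (fun x => ‖fderiv ℝ (f τ) x‖) (ENNReal.ofReal p) volume).toReal) := by
      refine integral_mono_ae hIinf ?_ ?_
      · exact ((hIq.const_mul _).add (hIbmo.const_mul _)).add (hIp.const_mul _)
      · filter_upwards [hcd, hfin] with τ hτ1 hτ2
        exact pointwise_bound hp hq hτ1 hτ2.2.1 hτ2.2.2.1 hτ2.2.2.2 k
    refine hmono.trans (le_of_eq ?_)
    have I1 : Integrable (fun τ => c1 q * (eLpNorm (f τ) (ENNReal.ofReal q) volume).toReal)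
        (volume.restrict (Set.Ioo s t)) := hIq.const_mul _
    have I2 : Integrable (fun τ => 8 * (k:ℝ) * bmoSeminorm (f τ))
        (volume.restrict (Set.Ioo s t)) := hIbmo.const_mul _
    have I3 : Integrable (fun τ => cM p * ((2:ℝ)⁻¹ ^ k) ^ α *
        (eLpNorm (fun x => ‖fderiv ℝ (f τ) x‖) (ENNReal.ofReal p) volume).toReal)
        (volume.restrict (Set.Ioo s t)) := hIp.const_mul _
    have I12 : Integrable (fun τ => c1 q * (eLpNorm (f τ) (ENNReal.ofReal q) volume).toReal
        + 8 * (k:ℝ) * bmoSeminorm (f τ)) (volume.restrict (Set.Ioo s t)) := I1.add I2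
    rw [integral_add I12 I3, integral_add I1 I2,
      integral_const_mul, integral_const_mul, integral_const_mul]
  by_cases hN1 : N ≤ 1
  · -- small N: use k = 0
    have h0 := key 0
    simp only [pow_zero, Nat.cast_zero, Real.one_rpow, mul_one, mul_zero, zero_mul,
      add_zero, zero_add] at h0
    have h1 : c1 q * B + cM p * N ≤ C * (A * Real.log (1 + N) + B + 1) := by
      have h2 : cM p * N ≤ cM p := by
        have := cM_nonneg p; nlinarith
      have h3 : c1 q * B ≤ C * B := by
        have : c1 q ≤ C := by rw [hC]; have := cM_nonneg p; linarith
        exact mul_le_mul_of_nonneg_right this hB0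
      have h4 : 0 ≤ C * (A * Real.log (1 + N)) :=
        mul_nonneg hC0 (mul_nonneg hA0 hlogN0)
      have h5 : cM p ≤ C := by rw [hC]; have := c1_nonneg q; linarith
      nlinarith
    calc _ ≤ c1 q * B + 8 * (0:ℕ) * A + cM p * N := by
          simpa using h0
      _ ≤ C * (A * Real.log (1 + N) + B + 1) := by
          push_cast; simpa using h1
  · push_neg at hN1
    have hlogN2 : Real.log 2 ≤ Real.log (1 + N) :=
      Real.log_le_log two_pos (by linarith)
    set k : ℕ := ⌈Real.logb 2 (1 + N) / α⌉₊ with hk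
    have hlb0 : 0 ≤ Real.logb 2 (1 + N) / α :=
      div_nonneg (Real.logb_nonneg one_lt_two (by linarith)) hα0.le
    have hk1 : Real.logb 2 (1 + N) / α ≤ (k:ℝ) := Nat.le_ceil _
    have hk2 : (k:ℝ) ≤ Real.logb 2 (1 + N) / α + 1 :=
      (Nat.ceil_lt_add_one hlb0).le
    -- smallness of the radius term
    have hrk : ((2:ℝ)⁻¹ ^ k) ^ α ≤ (1 + N)⁻¹ := by
      have e1 : ((2:ℝ)⁻¹ ^ k : ℝ) = (2:ℝ) ^ (-(k:ℝ)) := by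
        rw [inv_pow, ← Real.rpow_natCast (2:ℝ) k,
          ← Real.rpow_neg (by norm_num : (0:ℝ) ≤ 2)]
      rw [e1, ← Real.rpow_mul (by norm_num : (0:ℝ) ≤ 2)]
      have h6 : Real.logb 2 (1 + N) ≤ (k:ℝ) * α := by
        rw [div_le_iff₀ hα0] at hk1; linarith
      have h7 : (1 + N) ≤ (2:ℝ) ^ ((k:ℝ) * α) := by
        have := Real.rpow_logb (x := 1 + N) two_pos (by norm_num) (by linarith)
        calc (1 + N) = (2:ℝ) ^ Real.logb 2 (1 + N) := this.symm
          _ ≤ (2:ℝ) ^ ((k:ℝ) * α) :=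
            Real.rpow_le_rpow_left_iff one_lt_two |>.2 h6
      rw [show (-(k:ℝ) * α) = -((k:ℝ) * α) by ring, Real.rpow_neg (by norm_num)]
      exact inv_anti₀ (by linarith) h7
    have h8 := key k
    have h9 : cM p * ((2:ℝ)⁻¹ ^ k) ^ α * N ≤ cM p := by
      have h10 : ((2:ℝ)⁻¹ ^ k) ^ α * N ≤ 1 := by
        have h11 : ((2:ℝ)⁻¹ ^ k) ^ α * N ≤ (1 + N)⁻¹ * N :=
          mul_le_mul_of_nonneg_right hrk hN0
        have h12 : (1 + N)⁻¹ * N ≤ 1 := by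
          rw [inv_mul_le_iff₀ (by linarith)]; linarith
        linarith
      have := cM_nonneg p
      calc cM p * ((2:ℝ)⁻¹ ^ k) ^ α * N = cM p * (((2:ℝ)⁻¹ ^ k) ^ α * N) := by ring
        _ ≤ cM p * 1 := mul_le_mul_of_nonneg_left h10 this
        _ = cM p := mul_one _
    have h13 : 8 * (k:ℝ) * A ≤ K2 * (A * Real.log (1 + N)) := by
      have h14 : (k:ℝ) ≤ Real.log (1 + N) / (α * Real.log 2) + 1 := by
        have : Real.logb 2 (1 + N) = Real.log (1 + N) / Real.log 2 := Real.log_div_log.symm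
        rw [this] at hk2
        calc (k:ℝ) ≤ Real.log (1 + N) / Real.log 2 / α + 1 := hk2
          _ = Real.log (1 + N) / (α * Real.log 2) + 1 := by
            rw [div_div]; ring_nf
      have h15 : 8 * (k:ℝ) * A ≤ 8 * (Real.log (1 + N) / (α * Real.log 2) + 1) * A := by
        have : 8 * (k:ℝ) ≤ 8 * (Real.log (1 + N) / (α * Real.log 2) + 1) := by linarith
        exact mul_le_mul_of_nonneg_right this hA0
      have h16 : 8 * (Real.log (1 + N) / (α * Real.log 2) + 1) * A
          = (8 / (α * Real.log 2)) * (A * Real.log (1 + N)) + 8 * A := by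
        field_simp
      have h17 : 8 * A ≤ (8 / Real.log 2) * (A * Real.log (1 + N)) := by
        rw [div_mul_eq_mul_div, le_div_iff₀ hlog2]
        calc 8 * A * Real.log 2 = 8 * (A * Real.log 2) := by ring
          _ ≤ 8 * (A * Real.log (1 + N)) := by
            have : A * Real.log 2 ≤ A * Real.log (1 + N) :=
              mul_le_mul_of_nonneg_left hlogN2 hA0
            linarith
          _ = 8 * (A * Real.log (1 + N)) := rfl
      rw [hK2]
      calc 8 * (k:ℝ) * A ≤ (8 / (α * Real.log 2)) * (A * Real.log (1 + N)) + 8 * A := by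
            rw [← h16]; exact h15
        _ ≤ (8 / (α * Real.log 2)) * (A * Real.log (1 + N))
              + (8 / Real.log 2) * (A * Real.log (1 + N)) := by linarith
        _ = (8 / (α * Real.log 2) + 8 / Real.log 2) * (A * Real.log (1 + N)) := by ring
    have h18 : c1 q * B ≤ C * B := by
      have : c1 q ≤ C := by rw [hC]; have := cM_nonneg p; linarith
      exact mul_le_mul_of_nonneg_right this hB0
    have h19 : K2 * (A * Real.log (1 + N)) ≤ C * (A * Real.log (1 + N)) := by
      have : K2 ≤ C := by rw [hC]; have := c1_nonneg q; have := cM_nonneg p; linarith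
      exact mul_le_mul_of_nonneg_right this (mul_nonneg hA0 hlogN0)
    have h20 : cM p ≤ C := by rw [hC]; have := c1_nonneg q; linarith
    calc (∫ τ in Set.Ioo s t, (eLpNorm (f τ) ⊤ volume).toReal)
        ≤ c1 q * B + 8 * k * A + cM p * ((2:ℝ)⁻¹ ^ k) ^ α * N := h8
      _ ≤ C * B + K2 * (A * Real.log (1 + N)) + cM p :=
          add_le_add (add_le_add h18 h13) h9
      _ ≤ C * B + C * (A * Real.log (1 + N)) + C :=
          add_le_add (add_le_add le_rfl h19) h20
      _ = C * (A * Real.log (1 + N) + B + 1) := by ring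

end
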